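/- Lemma (Horizontal vs. vertical torsion, paper Lemma 7.9, in the saturation form in which it is proved and applied). Let R be a discrete valuation ring with uniformizer π. (Decreasing version) Let N be a finitely generated R-module with a decreasing filtration N = Fil^0 ⊇ Fil^1 ⊇ … by submodules with Fil^i = 0 for i > h, and for each i set Sat^i := {x ∈ N : π^m·x ∈ Fil^i for some m ≥ 0}. Then: (1) if Sat^i/Fil^i and Sat^{i+1}/Fil^{i+1} are both killed by π^n, then the torsion submodule of Fil^i/Fil^{i+1} is killed by π^n; (2) if for every i the torsion submodule of Fil^i/Fil^{i+1} is killed by π^n, then Sat^i/Fil^i is killed by π^{i·n}; in particular, if every graded piece Fil^i/Fil^{i+1} is torsion-free then Fil^i = Sat^i for all i. (Increasing version) Let N be a finitely generated R-module with an increasing filtration 0 = Fil_{−1} ⊆ Fil_0 ⊆ … ⊆ Fil_h = N, and Sat_i := {x ∈ N : π^m·x ∈ Fil_i for some m ≥ 0}. Then: (3) if Sat_{i−1}/Fil_{i−1} and Sat_i/Fil_i are both killed by π^n, then the torsion submodule of Fil_i/Fil_{i−1} is killed by π^n; (4) if for every i the torsion submodule of Fil_i/Fil_{i−1} is killed by π^n,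 then Sat_i/Fil_i is killed by π^{(h−i)·n}; in particular, if every graded piece is torsion-free then Fil_i = Sat_i for all i. -/

import Mathlib

/-!
Statement 14 (paper Lemma 7.9, "horizontal vs. vertical torsion", in the saturation
form in which it is proved and applied).

`R` is a discrete valuation ring with uniformizer `π`, and `N` a finitely generated
`R`-module.  For a submodule filtration step `Fil i`, its `π`-saturation is
`Sat i = {x ∈ N : π^m • x ∈ Fil i for some m}`; "`Sat i / Fil i` is killed by `π^n`"
is spelled out as `∀ x, (∃ m, π^m • x ∈ Fil i) → π^n • x ∈ Fil i`, and "the torsion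
submodule of `Fil i / Fil (i+1)` is killed by `π^n`" as
`∀ x ∈ Fil i, (∃ m, π^m • x ∈ Fil (i+1)) → π^n • x ∈ Fil (i+1)` (over a domain,
torsion elements of the quotient are exactly the classes killed by a power of `π`).
-/

open Submodule

noncomputable section

theorem horizontal_vs_vertical_torsion
    {R : Type*} [CommRing R] [IsDomain R] [IsDiscreteValuationRing R]
    (π : R) (hπ : Irreducible π)
    {N : Type*} [AddCommGroup N] [Module R N] [Module.Finite R N]
    (h : ℕ) :
    -- Decreasing version: `N = Fil^0 ⊇ Fil^1 ⊇ ⋯`, `Fil^i = 0` for `i > h`.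
    -- (1)
    (∀ Fil : ℕ → Submodule R N, Antitone Fil → Fil 0 = ⊤ → (∀ i, h < i → Fil i = ⊥) →
      ∀ (i n : ℕ),
        (∀ x : N, (∃ m : ℕ, π ^ m • x ∈ Fil i) → π ^ n • x ∈ Fil i) →
        (∀ x : N, (∃ m : ℕ, π ^ m • x ∈ Fil (i + 1)) → π ^ n • x ∈ Fil (i + 1)) →
        ∀ x ∈ Fil i, (∃ m : ℕ, π ^ m • x ∈ Fil (i + 1)) → π ^ n • x ∈ Fil (i + 1)) ∧
    -- (2)
    (∀ Fil : ℕ → Submodule R N, Antitone Fil → Fil 0 = ⊤ → (∀ i, h < i → Fil i = ⊥) →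
      ∀ n : ℕ,
        (∀ i : ℕ, ∀ x ∈ Fil i, (∃ m : ℕ, π ^ m • x ∈ Fil (i + 1)) →
          π ^ n • x ∈ Fil (i + 1)) →
        ∀ (i : ℕ) (x : N), (∃ m : ℕ, π ^ m • x ∈ Fil i) → π ^ (i * n) • x ∈ Fil i) ∧
    -- (2), "in particular": if every graded piece is torsion-free then `Fil^i = Sat^i`
    (∀ Fil : ℕ → Submodule R N, Antitone Fil → Fil 0 = ⊤ → (∀ i, h < i → Fil i = ⊥) →
      (∀ i : ℕ, ∀ x ∈ Fil i, (∃ m : ℕ, π ^ m • x ∈ Fil (i + 1)) → x ∈ Fil (i + 1)) →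
      ∀ (i : ℕ) (x : N), (∃ m : ℕ, π ^ m • x ∈ Fil i) → x ∈ Fil i) ∧
    -- Increasing version: `0 = Fil_{-1} ⊆ Fil_0 ⊆ ⋯ ⊆ Fil_h = N`
    -- (with `Fil_{i-1}` interpreted as `⊥` for `i = 0`).
    -- (3)
    (∀ Fil : ℕ → Submodule R N, Monotone Fil → Fil h = ⊤ →
      ∀ (i n : ℕ),
        (∀ x : N, (∃ m : ℕ, π ^ m • x ∈ (if i = 0 then (⊥ : Submodule R N) else Fil (i - 1))) →
          π ^ n • x ∈ (if i = 0 then (⊥ : Submodule R N) else Fil (i - 1))) →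
        (∀ x : N, (∃ m : ℕ, π ^ m • x ∈ Fil i) → π ^ n • x ∈ Fil i) →
        ∀ x ∈ Fil i,
          (∃ m : ℕ, π ^ m • x ∈ (if i = 0 then (⊥ : Submodule R N) else Fil (i - 1))) →
          π ^ n • x ∈ (if i = 0 then (⊥ : Submodule R N) else Fil (i - 1))) ∧
    -- (4)
    (∀ Fil : ℕ → Submodule R N, Monotone Fil → Fil h = ⊤ →
      ∀ n : ℕ,
        (∀ i : ℕ, ∀ x ∈ Fil i,
          (∃ m : ℕ, π ^ m • x ∈ (if i = 0 then (⊥ : Submodule R N) else Fil (i - 1))) →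
          π ^ n • x ∈ (if i = 0 then (⊥ : Submodule R N) else Fil (i - 1))) →
        ∀ (i : ℕ) (x : N), (∃ m : ℕ, π ^ m • x ∈ Fil i) → π ^ ((h - i) * n) • x ∈ Fil i) ∧
    -- (4), "in particular": if every graded piece is torsion-free then `Fil_i = Sat_i`
    (∀ Fil : ℕ → Submodule R N, Monotone Fil → Fil h = ⊤ →
      (∀ i : ℕ, ∀ x ∈ Fil i,
        (∃ m : ℕ, π ^ m • x ∈ (if i = 0 then (⊥ : Submodule R N) else Fil (i - 1))) →
        x ∈ (if i = 0 then (⊥ : Submodule R N) else Fil (i - 1))) →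
      ∀ (i : ℕ) (x : N), (∃ m : ℕ, π ^ m • x ∈ Fil i) → x ∈ Fil i) := by

  refine ⟨?_, ?_, ?_, ?_, ?_, ?_⟩
  · -- (1)
    intro Fil _ _ _ i n _ hsat x _ hx
    exact hsat x hx
  · -- (2)
    intro Fil hA h0 _ n hgr i
    induction i with
    | zero => intro x _; rw [h0]; trivial
    | succ i ih =>
      intro x hex
      obtain ⟨m, hm⟩ := hex
      have hx : π ^ (i * n) • x ∈ Fil i := ih x ⟨m, hA (Nat.le_succ i) hm⟩
      have h2 : π ^ m • π ^ (i * n) • x ∈ Fil (i + 1) := by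
        rw [smul_comm]; exact Submodule.smul_mem _ _ hm
      have h3 := hgr i _ hx ⟨m, h2⟩
      have h4 : π ^ ((i + 1) * n) • x = π ^ n • π ^ (i * n) • x := by
        rw [smul_smul, ← pow_add]; congr 1; ring
      rw [h4]; exact h3
  · -- (2')
    intro Fil hA h0 _ hgr i
    induction i with
    | zero => intro x _; rw [h0]; trivial
    | succ i ih =>
      intro x hex
      obtain ⟨m, hm⟩ := hex
      have hx : x ∈ Fil i := ih x ⟨m, hA (Nat.le_succ i) hm⟩
      exact hgr i x hx ⟨m, hm⟩
  · -- (3)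
    intro Fil _ _ i n hsat _ x _ hx
    exact hsat x hx
  · -- (4)
    intro Fil hM hh n hgr
    have key : ∀ d i, h ≤ i + d → ∀ x : N, (∃ m : ℕ, π ^ m • x ∈ Fil i) →
        π ^ (d * n) • x ∈ Fil i := by
      intro d
      induction d with
      | zero =>
        intro i hi x _
        have htop : (⊤ : Submodule R N) ≤ Fil i := hh ▸ hM (by omega)
        exact htop trivial
      | succ d ih =>
        intro i hi x hex
        obtain ⟨m, hm⟩ := hex
        have hx : π ^ (d * n) • x ∈ Fil (i + 1) :=
          ih (i + 1) (by omega) x ⟨m, hM (Nat.le_succ i) hm⟩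
        have h2 : π ^ m • π ^ (d * n) • x ∈ Fil i := by
          rw [smul_comm]; exact Submodule.smul_mem _ _ hm
        have h3 := hgr (i + 1) _ hx ⟨m, by simpa using h2⟩
        simp only [Nat.succ_ne_zero, if_false, Nat.add_sub_cancel] at h3
        have h4 : π ^ ((d + 1) * n) • x = π ^ n • π ^ (d * n) • x := by
          rw [smul_smul, ← pow_add]; congr 1; ring
        rw [h4]; exact h3
    intro i x hx
    exact key (h - i) i (by omega) x hx
  · -- (4')
    intro Fil hM hh hgr
    have key : ∀ d i, h ≤ i + d → ∀ x : N, (∃ m : ℕ, π ^ m • x ∈ Fil i) → x ∈ Fil i := by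
      intro d
      induction d with
      | zero =>
        intro i hi x _
        have htop : (⊤ : Submodule R N) ≤ Fil i := hh ▸ hM (by omega)
        exact htop trivial
      | succ d ih =>
        intro i hi x hex
        obtain ⟨m, hm⟩ := hex
        have hx : x ∈ Fil (i + 1) := ih (i + 1) (by omega) x ⟨m, hM (Nat.le_succ i) hm⟩
        have h3 := hgr (i + 1) x hx ⟨m, by simpa using hm⟩
        simpa using h3
    intro i x hx
    exact key (h - i) i (by omega) x hx
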